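/- If the second Hochschild cohomology group H²(A,A) of a finite-dimensional associative algebra A vanishes, then every formal one-parameter deformation of A is equivalent to the trivial deformation (A is formally rigid). -/

import Mathlib

/-- A formal one-parameter deformation of `m₀`, given by its coefficients. -/
def IsDeformationOf {K A : Type*} [Field K] [AddCommGroup A] [Module K A]
    (m₀ : A →ₗ[K] A →ₗ[K] A) (m : ℕ → A →ₗ[K] A →ₗ[K] A) : Prop :=
  m 0 = m₀ ∧ ∀ (k : ℕ) (x y z : A),
    ∑ p ∈ Finset.HasAntidiagonal.antidiagonal k,
      (m p.1 (m p.2 x y) z - m p.1 x (m p.2 y z)) = 0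

/-- Equivalence of formal deformations via `F_t = Id + t f₁ + ⋯`. -/
def AreEquivalentDeformations {K A : Type*} [Field K] [AddCommGroup A] [Module K A]
    (m m' : ℕ → A →ₗ[K] A →ₗ[K] A) : Prop :=
  ∃ F : ℕ → A →ₗ[K] A, F 0 = LinearMap.id ∧
    ∀ (k : ℕ) (x y : A),
      ∑ p ∈ Finset.HasAntidiagonal.antidiagonal k, F p.1 (m p.2 x y) =
        ∑ p ∈ Finset.HasAntidiagonal.antidiagonal k, ∑ q ∈ Finset.HasAntidiagonal.antidiagonal p.2,
          m' p.1 (F q.1 x) (F q.2 y)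

/-- The trivial deformation of `m₀`. -/
def TrivialDeformation {K A : Type*} [Field K] [AddCommGroup A] [Module K A]
    (m₀ : A →ₗ[K] A →ₗ[K] A) : ℕ → A →ₗ[K] A →ₗ[K] A :=
  fun k => if k = 0 then m₀ else 0

open Finset


open Finset

section Helpers

variable {M : Type*} [AddCommMonoid M]

lemma sum_adiag_regroup (n : ℕ) (f : ℕ → ℕ → ℕ → M) :
    ∑ p ∈ antidiagonal n, ∑ q ∈ antidiagonal p.2, f p.1 q.1 q.2 =
    ∑ p ∈ antidiagonal n, ∑ q ∈ antidiagonal p.1, f q.1 q.2 p.2 := by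
  rw [Finset.sum_sigma' (antidiagonal n) (fun p => antidiagonal p.2)
    (fun p q => f p.1 q.1 q.2),
    Finset.sum_sigma' (antidiagonal n) (fun p => antidiagonal p.1)
    (fun p q => f q.1 q.2 p.2)]
  refine Finset.sum_nbij' (i := fun x => ⟨(x.1.1 + x.2.1, x.2.2), (x.1.1, x.2.1)⟩)
    (j := fun x => ⟨(x.2.1, x.2.2 + x.1.2), (x.2.2, x.1.2)⟩) ?_ ?_ ?_ ?_ ?_
  · rintro ⟨⟨a, s⟩, ⟨i, j⟩⟩ h
    simp only [Finset.mem_sigma, Finset.HasAntidiagonal.mem_antidiagonal] at h ⊢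
    exact ⟨by omega, trivial⟩
  · rintro ⟨⟨s, c⟩, ⟨a, b⟩⟩ h
    simp only [Finset.mem_sigma, Finset.HasAntidiagonal.mem_antidiagonal] at h ⊢
    exact ⟨by omega, trivial⟩
  · rintro ⟨⟨a, s⟩, ⟨i, j⟩⟩ h
    simp only [Finset.mem_sigma, Finset.HasAntidiagonal.mem_antidiagonal] at h
    obtain ⟨h1, h2⟩ := h
    subst h2
    rfl
  · rintro ⟨⟨s, c⟩, ⟨a, b⟩⟩ h
    simp only [Finset.mem_sigma, Finset.HasAntidiagonal.mem_antidiagonal] at h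
    obtain ⟨h1, h2⟩ := h
    subst h2
    rfl
  · rintro ⟨⟨a, s⟩, ⟨i, j⟩⟩ h
    rfl

lemma sum_adiag_single_left (n : ℕ) (f : ℕ → ℕ → M)
    (hf : ∀ p ∈ antidiagonal n, p.1 ≠ n → f p.1 p.2 = 0) :
    ∑ p ∈ antidiagonal n, f p.1 p.2 = f n 0 := by
  rw [Finset.sum_eq_single_of_mem ((n, 0) : ℕ × ℕ) (by simp)]
  rintro ⟨a, b⟩ hp hne
  refine hf _ hp fun h => hne ?_
  simp only [Finset.HasAntidiagonal.mem_antidiagonal] at hp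
  subst h
  obtain rfl : b = 0 := by omega
  rfl

lemma sum_adiag_single_right (n : ℕ) (f : ℕ → ℕ → M)
    (hf : ∀ p ∈ antidiagonal n, p.2 ≠ n → f p.1 p.2 = 0) :
    ∑ p ∈ antidiagonal n, f p.1 p.2 = f 0 n := by
  rw [Finset.sum_eq_single_of_mem ((0, n) : ℕ × ℕ) (by simp)]
  rintro ⟨a, b⟩ hp hne
  refine hf _ hp fun h => hne ?_
  simp only [Finset.HasAntidiagonal.mem_antidiagonal] at hp
  subst h
  obtain rfl : a = 0 := by omega
  rfl

end Helpers

open Finset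

section Core

variable {K A : Type*} [Field K] [AddCommGroup A] [Module K A]

/-- Hochschild 2-cocycle condition. -/
def IsCo (m₀ : A →ₗ[K] A →ₗ[K] A) (φ : A →ₗ[K] A →ₗ[K] A) : Prop :=
  ∀ x y z : A, m₀ x (φ y z) - φ (m₀ x y) z + φ x (m₀ y z) - m₀ (φ x y) z = 0

/-- (minus the) Hochschild coboundary of a 1-cochain. -/
noncomputable def dB (m₀ : A →ₗ[K] A →ₗ[K] A) (g : A →ₗ[K] A) : A →ₗ[K] A →ₗ[K] A :=
  m₀.compr₂ g - m₀.compl₁₂ g LinearMap.id - m₀.compl₁₂ LinearMap.id g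

lemma dB_apply (m₀ : A →ₗ[K] A →ₗ[K] A) (g : A →ₗ[K] A) (x y : A) :
    dB m₀ g x y = g (m₀ x y) - m₀ (g x) y - m₀ x (g y) := by
  simp [dB, LinearMap.compr₂_apply, LinearMap.compl₁₂_apply]

lemma dB_isCo (m₀ : A →ₗ[K] A →ₗ[K] A)
    (hassoc : ∀ x y z : A, m₀ (m₀ x y) z = m₀ x (m₀ y z)) (g : A →ₗ[K] A) :
    IsCo m₀ (dB m₀ g) := by
  intro x y z
  simp only [dB_apply, map_sub, LinearMap.sub_apply, hassoc]
  abel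

lemma IsCo_add (m₀ φ ψ : A →ₗ[K] A →ₗ[K] A) (hφ : IsCo m₀ φ) (hψ : IsCo m₀ ψ) :
    IsCo m₀ (φ + ψ) := by
  intro x y z
  have h3 : (m₀ x (φ y z) - φ (m₀ x y) z + φ x (m₀ y z) - m₀ (φ x y) z) +
      (m₀ x (ψ y z) - ψ (m₀ x y) z + ψ x (m₀ y z) - m₀ (ψ x y) z) = 0 := by
    rw [hφ x y z, hψ x y z, add_zero]
  simp only [LinearMap.add_apply, map_add]
  rw [← h3]; abel

variable (m₀ : A →ₗ[K] A →ₗ[K] A) (m : ℕ → A →ₗ[K] A →ₗ[K] A)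

/-- The `k`-th "defect" of a candidate equivalence `F`. -/
noncomputable def Bmap (F : ℕ → A →ₗ[K] A) (k : ℕ) : A →ₗ[K] A →ₗ[K] A :=
  ∑ p ∈ antidiagonal k, (m₀.compl₁₂ (F p.1) (F p.2) - (m p.2).compr₂ (F p.1))

lemma Bmap_apply (F : ℕ → A →ₗ[K] A) (k : ℕ) (x y : A) :
    Bmap m₀ m F k x y =
      ∑ p ∈ antidiagonal k, (m₀ (F p.1 x) (F p.2 y) - F p.1 (m p.2 x y)) := by
  simp [Bmap, LinearMap.sum_apply, LinearMap.sub_apply, LinearMap.compl₁₂_apply,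
    LinearMap.compr₂_apply]

/-- the part of `Bmap F n` not involving `F n`, negated appropriately. -/
noncomputable def Phi (F : ℕ → A →ₗ[K] A) (n : ℕ) : A →ₗ[K] A →ₗ[K] A :=
  ∑ p ∈ antidiagonal n,
    ((if p.1 = 0 ∨ p.2 = 0 then 0 else m₀.compl₁₂ (F p.1) (F p.2)) -
     (if p.2 = 0 then 0 else (m p.2).compr₂ (F p.1)))

lemma Phi_congr (F G : ℕ → A →ₗ[K] A) (n : ℕ) (h : ∀ i < n, F i = G i) :
    Phi m₀ m F n = Phi m₀ m G n := by
  unfold Phi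
  refine Finset.sum_congr rfl fun p hp => ?_
  simp only [Finset.HasAntidiagonal.mem_antidiagonal] at hp
  by_cases h2 : p.2 = 0
  · simp [h2]
  · have hp1 : p.1 < n := by omega
    rw [h p.1 hp1]
    by_cases h1 : p.1 = 0
    · simp [h1, h2]
    · have hp2 : p.2 < n := by omega
      rw [h p.2 hp2]

lemma Bmap_eq (F : ℕ → A →ₗ[K] A) (hF0 : F 0 = LinearMap.id) (hm0 : m 0 = m₀)
    {n : ℕ} (hn : n ≠ 0) :
    Bmap m₀ m F n = Phi m₀ m F n - dB m₀ (F n) := by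
  have key : Bmap m₀ m F n - Phi m₀ m F n = - dB m₀ (F n) := by
    unfold Bmap Phi
    rw [← Finset.sum_sub_distrib]
    have step : ∀ p ∈ antidiagonal n,
        (m₀.compl₁₂ (F p.1) (F p.2) - (m p.2).compr₂ (F p.1)) -
        ((if p.1 = 0 ∨ p.2 = 0 then 0 else m₀.compl₁₂ (F p.1) (F p.2)) -
         (if p.2 = 0 then 0 else (m p.2).compr₂ (F p.1))) =
        ((if p = ((0 : ℕ), n) then m₀.compl₁₂ (F p.1) (F p.2) else 0) +
         (if p = ((n : ℕ), 0) then m₀.compl₁₂ (F p.1) (F p.2) else 0)) -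
        (if p = ((n : ℕ), 0) then (m p.2).compr₂ (F p.1) else 0) := by
      rintro ⟨a, b⟩ hp
      simp only [Finset.HasAntidiagonal.mem_antidiagonal] at hp
      by_cases h2 : b = 0
      · subst h2
        obtain rfl : a = n := by omega
        simp [hn, Prod.ext_iff]
      · by_cases h1 : a = 0
        · subst h1
          obtain rfl : b = n := by omega
          simp [hn, h2, Prod.ext_iff, Ne.symm hn]
        · simp [h1, h2, Prod.ext_iff]
    rw [Finset.sum_congr rfl step, Finset.sum_sub_distrib, Finset.sum_add_distrib,
      Finset.sum_ite_eq' (antidiagonal n) ((0 : ℕ), n),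
      Finset.sum_ite_eq' (antidiagonal n) ((n : ℕ), 0),
      Finset.sum_ite_eq' (antidiagonal n) ((n : ℕ), 0)]
    simp only [Finset.HasAntidiagonal.mem_antidiagonal, zero_add, add_zero, if_pos,
      Nat.zero_add, Nat.add_zero]
    ext x y
    simp only [LinearMap.add_apply, LinearMap.sub_apply, LinearMap.neg_apply,
      LinearMap.compl₁₂_apply, LinearMap.compr₂_apply, dB_apply, hF0, hm0,
      LinearMap.id_coe, id_eq]
    abel
  have := key
  rw [sub_eq_iff_eq_add] at this
  rw [this]
  abel

end Core
section Key

variable {K A : Type*} [Field K] [AddCommGroup A] [Module K A]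
variable (m₀ : A →ₗ[K] A →ₗ[K] A) (m : ℕ → A →ₗ[K] A →ₗ[K] A)

lemma isCo_Bmap (hassoc : ∀ x y z : A, m₀ (m₀ x y) z = m₀ x (m₀ y z))
    (hm : IsDeformationOf m₀ m) (F : ℕ → A →ₗ[K] A) (hF0 : F 0 = LinearMap.id)
    (n : ℕ) (hB : ∀ k < n, Bmap m₀ m F k = 0) :
    IsCo m₀ (Bmap m₀ m F n) := by
  intro x y z
  have hswap : ∀ (s : ℕ) (g : ℕ × ℕ → A),
      ∑ q ∈ antidiagonal s, g q = ∑ q ∈ antidiagonal s, g q.swap :=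
    fun s g => (Finset.Nat.sum_antidiagonal_swap (n := s) (f := g)).symm
  have hBdef : ∀ (s : ℕ) (u v : A),
      ∑ q ∈ antidiagonal s, F q.1 (m q.2 u v) =
      ∑ q ∈ antidiagonal s, m₀ (F q.1 u) (F q.2 v) - Bmap m₀ m F s u v := by
    intro s u v
    rw [Bmap_apply, Finset.sum_sub_distrib]
    abel
  have hlt : ∀ (a b : ℕ), a + b = n → (a, b) ≠ ((n : ℕ), 0) → a < n := by
    rintro a b hab hne
    rcases Nat.lt_or_ge a n with h | h
    · exact h
    · exfalso
      obtain rfl : a = n := by omega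
      obtain rfl : b = 0 := by omega
      exact hne rfl
  have hlt' : ∀ (a b : ℕ), a + b = n → (a, b) ≠ ((0 : ℕ), n) → b < n := by
    rintro a b hab hne
    rcases Nat.lt_or_ge b n with h | h
    · exact h
    · exfalso
      obtain rfl : b = n := by omega
      obtain rfl : a = 0 := by omega
      exact hne rfl
  have hone1 : ∑ p ∈ antidiagonal n, Bmap m₀ m F p.1 (m p.2 x y) z
      = Bmap m₀ m F n (m₀ x y) z := by
    rw [Finset.sum_eq_single_of_mem ((n, 0) : ℕ × ℕ) (by simp)]
    · rw [hm.1]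
    · rintro ⟨a, b⟩ hp hne
      simp only [Finset.HasAntidiagonal.mem_antidiagonal] at hp
      rw [hB a (hlt a b hp hne)]
      simp
  have hone2 : ∑ p ∈ antidiagonal n, Bmap m₀ m F p.1 x (m p.2 y z)
      = Bmap m₀ m F n x (m₀ y z) := by
    rw [Finset.sum_eq_single_of_mem ((n, 0) : ℕ × ℕ) (by simp)]
    · rw [hm.1]
    · rintro ⟨a, b⟩ hp hne
      simp only [Finset.HasAntidiagonal.mem_antidiagonal] at hp
      rw [hB a (hlt a b hp hne)]
      simp
  have hone3 : ∑ p ∈ antidiagonal n, m₀ (Bmap m₀ m F p.2 x y) (F p.1 z)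
      = m₀ (Bmap m₀ m F n x y) z := by
    rw [Finset.sum_eq_single_of_mem ((0, n) : ℕ × ℕ) (by simp)]
    · rw [hF0]; rfl
    · rintro ⟨a, b⟩ hp hne
      simp only [Finset.HasAntidiagonal.mem_antidiagonal] at hp
      rw [hB b (hlt' a b hp hne)]
      simp
  have hone4 : ∑ p ∈ antidiagonal n, m₀ (F p.1 x) (Bmap m₀ m F p.2 y z)
      = m₀ x (Bmap m₀ m F n y z) := by
    rw [Finset.sum_eq_single_of_mem ((0, n) : ℕ × ℕ) (by simp)]
    · rw [hF0]; rfl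
    · rintro ⟨a, b⟩ hp hne
      simp only [Finset.HasAntidiagonal.mem_antidiagonal] at hp
      rw [hB b (hlt' a b hp hne)]
      simp
  have hstart :
      (∑ p ∈ antidiagonal n, ∑ q ∈ antidiagonal p.2, F p.1 (m q.1 (m q.2 x y) z))
      - (∑ p ∈ antidiagonal n, ∑ q ∈ antidiagonal p.2, F p.1 (m q.1 x (m q.2 y z))) = 0 := by
    rw [← Finset.sum_sub_distrib]
    refine Finset.sum_eq_zero fun p hp => ?_
    rw [← Finset.sum_sub_distrib]
    have e : ∀ q ∈ antidiagonal p.2,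
        F p.1 (m q.1 (m q.2 x y) z) - F p.1 (m q.1 x (m q.2 y z))
        = F p.1 (m q.1 (m q.2 x y) z - m q.1 x (m q.2 y z)) :=
      fun q _ => (map_sub _ _ _).symm
    rw [Finset.sum_congr rfl e, ← map_sum, hm.2 p.2 x y z, map_zero]
  have hS1 :
      (∑ p ∈ antidiagonal n, ∑ q ∈ antidiagonal p.2, F p.1 (m q.1 (m q.2 x y) z))
      = (∑ p ∈ antidiagonal n, ∑ q ∈ antidiagonal p.2,
          m₀ (m₀ (F q.1 x) (F q.2 y)) (F p.1 z))
        - m₀ (Bmap m₀ m F n x y) z - Bmap m₀ m F n (m₀ x y) z := by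
    rw [sum_adiag_regroup n (fun a i j => F a (m i (m j x y) z))]
    have e1 : ∀ p ∈ antidiagonal n,
        ∑ q ∈ antidiagonal p.1, F q.1 (m q.2 (m p.2 x y) z)
        = ∑ q ∈ antidiagonal p.1, m₀ (F q.1 (m p.2 x y)) (F q.2 z)
          - Bmap m₀ m F p.1 (m p.2 x y) z :=
      fun p _ => hBdef p.1 (m p.2 x y) z
    rw [Finset.sum_congr rfl e1, Finset.sum_sub_distrib, hone1]
    have e2 : ∀ p ∈ antidiagonal n,
        ∑ q ∈ antidiagonal p.1, m₀ (F q.1 (m p.2 x y)) (F q.2 z)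
        = ∑ q ∈ antidiagonal p.1, m₀ (F q.2 (m p.2 x y)) (F q.1 z) :=
      fun p _ => hswap p.1 (fun q => m₀ (F q.1 (m p.2 x y)) (F q.2 z))
    rw [Finset.sum_congr rfl e2,
      ← sum_adiag_regroup n (fun a b c => m₀ (F b (m c x y)) (F a z))]
    have e3 : ∀ p ∈ antidiagonal n,
        ∑ q ∈ antidiagonal p.2, m₀ (F q.1 (m q.2 x y)) (F p.1 z)
        = ∑ q ∈ antidiagonal p.2, m₀ (m₀ (F q.1 x) (F q.2 y)) (F p.1 z)
          - m₀ (Bmap m₀ m F p.2 x y) (F p.1 z) := by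
      intro p _
      have h1 : (∑ q ∈ antidiagonal p.2, m₀ (F q.1 (m q.2 x y)))
          = (∑ q ∈ antidiagonal p.2, m₀ (m₀ (F q.1 x) (F q.2 y)))
            - m₀ (Bmap m₀ m F p.2 x y) := by
        rw [← map_sum, ← map_sum, ← map_sub, hBdef p.2 x y]
      calc ∑ q ∈ antidiagonal p.2, m₀ (F q.1 (m q.2 x y)) (F p.1 z)
          = (∑ q ∈ antidiagonal p.2, m₀ (F q.1 (m q.2 x y))) (F p.1 z) :=
            (LinearMap.sum_apply _ _ _).symm
        _ = ((∑ q ∈ antidiagonal p.2, m₀ (m₀ (F q.1 x) (F q.2 y)))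
              - m₀ (Bmap m₀ m F p.2 x y)) (F p.1 z) := by rw [h1]
        _ = ∑ q ∈ antidiagonal p.2, m₀ (m₀ (F q.1 x) (F q.2 y)) (F p.1 z)
              - m₀ (Bmap m₀ m F p.2 x y) (F p.1 z) := by
            rw [LinearMap.sub_apply, LinearMap.sum_apply]
    rw [Finset.sum_congr rfl e3, Finset.sum_sub_distrib, hone3]
  have hS2 :
      (∑ p ∈ antidiagonal n, ∑ q ∈ antidiagonal p.2, F p.1 (m q.1 x (m q.2 y z)))
      = (∑ p ∈ antidiagonal n, ∑ q ∈ antidiagonal p.2,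
          m₀ (F p.1 x) (m₀ (F q.1 y) (F q.2 z)))
        - m₀ x (Bmap m₀ m F n y z) - Bmap m₀ m F n x (m₀ y z) := by
    rw [sum_adiag_regroup n (fun a i j => F a (m i x (m j y z)))]
    have e1 : ∀ p ∈ antidiagonal n,
        ∑ q ∈ antidiagonal p.1, F q.1 (m q.2 x (m p.2 y z))
        = ∑ q ∈ antidiagonal p.1, m₀ (F q.1 x) (F q.2 (m p.2 y z))
          - Bmap m₀ m F p.1 x (m p.2 y z) :=
      fun p _ => hBdef p.1 x (m p.2 y z)
    rw [Finset.sum_congr rfl e1, Finset.sum_sub_distrib, hone2]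
    rw [← sum_adiag_regroup n (fun a b c => m₀ (F a x) (F b (m c y z)))]
    have e3 : ∀ p ∈ antidiagonal n,
        ∑ q ∈ antidiagonal p.2, m₀ (F p.1 x) (F q.1 (m q.2 y z))
        = ∑ q ∈ antidiagonal p.2, m₀ (F p.1 x) (m₀ (F q.1 y) (F q.2 z))
          - m₀ (F p.1 x) (Bmap m₀ m F p.2 y z) := by
      intro p _
      rw [← map_sum, ← map_sum, ← map_sub, hBdef p.2 y z]
    rw [Finset.sum_congr rfl e3, Finset.sum_sub_distrib, hone4]
  have hT :
      (∑ p ∈ antidiagonal n, ∑ q ∈ antidiagonal p.2,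
        m₀ (m₀ (F q.1 x) (F q.2 y)) (F p.1 z))
      = ∑ p ∈ antidiagonal n, ∑ q ∈ antidiagonal p.2,
          m₀ (F p.1 x) (m₀ (F q.1 y) (F q.2 z)) := by
    simp only [hassoc]
    have e4 :
        (∑ p ∈ antidiagonal n, ∑ q ∈ antidiagonal p.2,
          m₀ (F q.1 x) (m₀ (F q.2 y) (F p.1 z)))
        = ∑ p ∈ antidiagonal n, ∑ q ∈ antidiagonal p.1,
            m₀ (F q.1 x) (m₀ (F q.2 y) (F p.2 z)) :=
      hswap n (fun p => ∑ q ∈ antidiagonal p.2, m₀ (F q.1 x) (m₀ (F q.2 y) (F p.1 z)))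
    rw [e4, ← sum_adiag_regroup n (fun a b c => m₀ (F a x) (m₀ (F b y) (F c z)))]
  rw [hT] at hS1
  have hfinal :
      ((∑ p ∈ antidiagonal n, ∑ q ∈ antidiagonal p.2,
          m₀ (F p.1 x) (m₀ (F q.1 y) (F q.2 z)))
        - m₀ (Bmap m₀ m F n x y) z - Bmap m₀ m F n (m₀ x y) z)
      - ((∑ p ∈ antidiagonal n, ∑ q ∈ antidiagonal p.2,
          m₀ (F p.1 x) (m₀ (F q.1 y) (F q.2 z)))
        - m₀ x (Bmap m₀ m F n y z) - Bmap m₀ m F n x (m₀ y z)) = 0 := by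
    rw [← hS1, ← hS2]
    exact hstart
  rw [← hfinal]
  abel

end Key
section Construct

open scoped Classical

variable {K A : Type*} [Field K] [AddCommGroup A] [Module K A]
variable (m₀ : A →ₗ[K] A →ₗ[K] A) (m : ℕ → A →ₗ[K] A →ₗ[K] A)

noncomputable def stepF
    (hH2 : ∀ φ : A →ₗ[K] A →ₗ[K] A, IsCo m₀ φ →
      ∃ g : A →ₗ[K] A, ∀ x y : A, φ x y = m₀ x (g y) - g (m₀ x y) + m₀ (g x) y)
    (G : ℕ → A →ₗ[K] A) (n : ℕ) : A →ₗ[K] A :=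
  if h : IsCo m₀ (Phi m₀ m G n) then -Classical.choose (hH2 _ h) else 0

noncomputable def FSeq
    (hH2 : ∀ φ : A →ₗ[K] A →ₗ[K] A, IsCo m₀ φ →
      ∃ g : A →ₗ[K] A, ∀ x y : A, φ x y = m₀ x (g y) - g (m₀ x y) + m₀ (g x) y) :
    ℕ → ℕ → A →ₗ[K] A
  | 0 => fun _ => LinearMap.id
  | (n + 1) => Function.update (FSeq hH2 n) (n + 1)
      (stepF m₀ m hH2 (FSeq hH2 n) (n + 1))

noncomputable def Fc
    (hH2 : ∀ φ : A →ₗ[K] A →ₗ[K] A, IsCo m₀ φ →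
      ∃ g : A →ₗ[K] A, ∀ x y : A, φ x y = m₀ x (g y) - g (m₀ x y) + m₀ (g x) y) :
    ℕ → A →ₗ[K] A :=
  fun n => FSeq m₀ m hH2 n n

variable (hH2 : ∀ φ : A →ₗ[K] A →ₗ[K] A, IsCo m₀ φ →
      ∃ g : A →ₗ[K] A, ∀ x y : A, φ x y = m₀ x (g y) - g (m₀ x y) + m₀ (g x) y)

lemma FSeq_stable : ∀ n i, i ≤ n → FSeq m₀ m hH2 n i = Fc m₀ m hH2 i := by
  intro n
  induction n with
  | zero =>
    intro i hi
    obtain rfl : i = 0 := by omega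
    rfl
  | succ n ih =>
    intro i hi
    rcases Nat.lt_or_ge i (n + 1) with h | h
    · show Function.update (FSeq m₀ m hH2 n) (n + 1)
        (stepF m₀ m hH2 (FSeq m₀ m hH2 n) (n + 1)) i = _
      rw [Function.update_of_ne (by omega)]
      exact ih i (by omega)
    · obtain rfl : i = n + 1 := by omega
      rfl

lemma Fc_succ (n : ℕ) :
    Fc m₀ m hH2 (n + 1) = stepF m₀ m hH2 (FSeq m₀ m hH2 n) (n + 1) := by
  show Function.update (FSeq m₀ m hH2 n) (n + 1)
      (stepF m₀ m hH2 (FSeq m₀ m hH2 n) (n + 1)) (n + 1) = _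
  rw [Function.update_self]

lemma Bmap_Fc_zero (hassoc : ∀ x y z : A, m₀ (m₀ x y) z = m₀ x (m₀ y z))
    (hm : IsDeformationOf m₀ m) :
    ∀ n, Bmap m₀ m (Fc m₀ m hH2) n = 0 := by
  intro n
  induction n using Nat.strong_induction_on with
  | _ n IH =>
    cases n with
    | zero =>
      ext x y
      have h0 : Fc m₀ m hH2 0 = LinearMap.id := rfl
      simp [Bmap_apply, h0, hm.1]
    | succ n =>
      have hco : IsCo m₀ (Bmap m₀ m (Fc m₀ m hH2) (n + 1)) :=
        isCo_Bmap m₀ m hassoc hm _ rfl _ (fun k hk => IH k hk)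
      have hphi_eq : Phi m₀ m (Fc m₀ m hH2) (n + 1)
          = Phi m₀ m (FSeq m₀ m hH2 n) (n + 1) :=
        Phi_congr m₀ m _ _ _ (fun i hi =>
          (FSeq_stable m₀ m hH2 n i (by omega)).symm)
      have hBeq := Bmap_eq m₀ m (Fc m₀ m hH2) rfl hm.1 (Nat.succ_ne_zero n)
      have hphi_co : IsCo m₀ (Phi m₀ m (FSeq m₀ m hH2 n) (n + 1)) := by
        rw [← hphi_eq]
        have h2 : Phi m₀ m (Fc m₀ m hH2) (n + 1)
            = Bmap m₀ m (Fc m₀ m hH2) (n + 1) + dB m₀ (Fc m₀ m hH2 (n + 1)) := by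
          rw [hBeq]; abel
        rw [h2]
        exact IsCo_add _ _ _ hco (dB_isCo m₀ hassoc _)
      have hstep : Fc m₀ m hH2 (n + 1) = -Classical.choose (hH2 _ hphi_co) := by
        rw [Fc_succ]
        unfold stepF
        rw [dif_pos hphi_co]
      have hgspec := Classical.choose_spec (hH2 _ hphi_co)
      ext x y
      rw [hBeq]
      simp only [LinearMap.sub_apply, LinearMap.zero_apply]
      rw [hphi_eq, hgspec x y, dB_apply, hstep]
      simp only [LinearMap.neg_apply, map_neg]
      abel

end Construct

/-- If `H²(A,A) = 0` (every Hochschild 2-cocycle is a 2-coboundary) for a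
finite-dimensional associative algebra `A`, then every formal one-parameter
deformation of `A` is equivalent to the trivial deformation. -/
theorem stmt_10 {K A : Type*} [Field K] [AddCommGroup A] [Module K A]
    [FiniteDimensional K A]
    (m₀ : A →ₗ[K] A →ₗ[K] A)
    (hassoc : ∀ x y z : A, m₀ (m₀ x y) z = m₀ x (m₀ y z))
    (hH2 : ∀ φ : A →ₗ[K] A →ₗ[K] A,
      (∀ x y z : A,
        m₀ x (φ y z) - φ (m₀ x y) z + φ x (m₀ y z) - m₀ (φ x y) z = 0) →
      ∃ g : A →ₗ[K] A, ∀ x y : A,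
        φ x y = m₀ x (g y) - g (m₀ x y) + m₀ (g x) y) :
    ∀ m : ℕ → A →ₗ[K] A →ₗ[K] A, IsDeformationOf m₀ m →
      AreEquivalentDeformations m (TrivialDeformation m₀) := by
  intro m hm
  have hH2' : ∀ φ : A →ₗ[K] A →ₗ[K] A, IsCo m₀ φ →
      ∃ g : A →ₗ[K] A, ∀ x y : A, φ x y = m₀ x (g y) - g (m₀ x y) + m₀ (g x) y :=
    fun φ h => hH2 φ h
  refine ⟨Fc m₀ m hH2', rfl, ?_⟩
  intro k x y
  have hBk := Bmap_Fc_zero m₀ m hH2' hassoc hm k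
  have hRHS : (∑ p ∈ antidiagonal k, ∑ q ∈ antidiagonal p.2,
        TrivialDeformation m₀ p.1 (Fc m₀ m hH2' q.1 x) (Fc m₀ m hH2' q.2 y))
      = ∑ q ∈ antidiagonal k, m₀ (Fc m₀ m hH2' q.1 x) (Fc m₀ m hH2' q.2 y) := by
    rw [Finset.sum_eq_single_of_mem ((0 : ℕ), k) (by simp)]
    · simp [TrivialDeformation]
    · rintro ⟨a, b⟩ hp hne
      have ha : a ≠ 0 := by
        rintro rfl
        simp only [Finset.HasAntidiagonal.mem_antidiagonal] at hp
        obtain rfl : b = k := by omega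
        exact hne rfl
      simp [TrivialDeformation, ha]
  rw [hRHS]
  have h0 : Bmap m₀ m (Fc m₀ m hH2') k x y = 0 := by
    rw [hBk]; rfl
  rw [Bmap_apply, Finset.sum_sub_distrib, sub_eq_zero] at h0
  exact h0.symm
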